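/- arXiv:2108.06635 — 3 statements merged into one kernel-verified Lean document; each statement's English description precedes it below -/
import Mathlib

section
/- Let A be a real symmetric n×n matrix and B a principal submatrix of A of size (n-1)×(n-1). Then the eigenvalues of B interlace those of A: if μ_1 ≤ ... ≤ μ_{n-1} are the eigenvalues of B and λ_1 ≤ ... ≤ λ_n those of A, then λ_i ≤ μ_i ≤ λ_{i+1} for all 1 ≤ i ≤ n-1. -/
open Submodule Finset
open scoped RealInnerProductSpace

noncomputable section CauchyInterlacing

/-- Symmetry of the bilinear form of a real symmetric matrix. -/
private lemma herm_inner_mulVec {m : ℕ} {A : Matrix (Fin m) (Fin m) ℝ} (hA : A.IsHermitian)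
    (v w : EuclideanSpace ℝ (Fin m)) :
    ⟪v, ((WithLp.equiv 2 (Fin m → ℝ)).symm (A.mulVec w))⟫
      = ⟪((WithLp.equiv 2 (Fin m → ℝ)).symm (A.mulVec v)), w⟫ := by
  simp only [PiLp.inner_apply, RCLike.inner_apply, conj_trivial,
    WithLp.equiv_symm_apply, PiLp.toLp_apply, Matrix.mulVec, dotProduct]
  simp_rw [Finset.mul_sum, Finset.sum_mul]
  rw [Finset.sum_comm]
  refine Finset.sum_congr rfl fun k _ => Finset.sum_congr rfl fun l _ => ?_
  have h : A l k = A k l := by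
    have := congrFun (congrFun hA.symm l) k
    simpa [Matrix.conjTranspose_apply] using this
  rw [h]; ring

private lemma quad_expand {m : ℕ} {A : Matrix (Fin m) (Fin m) ℝ} (hA : A.IsHermitian)
    (s : Set (Fin m)) {x : EuclideanSpace ℝ (Fin m)}
    (hx : x ∈ span ℝ (⇑hA.eigenvectorBasis '' s)) :
    (∀ j ∉ s, hA.eigenvectorBasis.repr x j = 0) ∧
    ⟪x, x⟫ = ∑ j, hA.eigenvectorBasis.repr x j * hA.eigenvectorBasis.repr x j ∧
    ⟪x, ((WithLp.equiv 2 (Fin m → ℝ)).symm (A.mulVec x))⟫ = ∑ j, hA.eigenvalues j *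
      (hA.eigenvectorBasis.repr x j * hA.eigenvectorBasis.repr x j) := by
  classical
  set b := hA.eigenvectorBasis with hb
  set f : Fin m → ℝ := fun j => b.repr x j with hf
  have hvan : ∀ j ∉ s, f j = 0 := by
    intro j hj
    have hxk : x ∈ LinearMap.ker ((innerSL ℝ (b j)).toLinearMap) := by
      refine span_le.mpr ?_ hx
      rintro y ⟨k, hk, rfl⟩
      have hjk : j ≠ k := fun h => hj (h ▸ hk)
      have : ⟪b j, b k⟫ = 0 := b.orthonormal.2 hjk
      simpa [LinearMap.mem_ker] using this
    have h0 : ⟪b j, x⟫ = 0 := by simpa [LinearMap.mem_ker] using hxk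
    rw [hf]; simpa [b.repr_apply_apply] using h0
  have hxe : x = ∑ j, f j • b j := (b.sum_repr x).symm
  refine ⟨hvan, ?_, ?_⟩
  · conv_lhs => rw [hxe]
    rw [b.orthonormal.inner_sum]
    simp
    rfl
  · nth_rewrite 1 [hxe]
    rw [sum_inner]
    refine Finset.sum_congr rfl fun j _ => ?_
    rw [real_inner_smul_left, herm_inner_mulVec hA]
    have h2 : (WithLp.equiv 2 (Fin m → ℝ)).symm (A.mulVec (b j)) = hA.eigenvalues j • b j :=
      by rw [WithLp.equiv_symm_apply, hA.mulVec_eigenvectorBasis j]; rfl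
    rw [h2, real_inner_smul_left]
    have h3 : ⟪b j, x⟫ = f j := by rw [hf]; simp [b.repr_apply_apply]
    rw [h3]; ring

private lemma quad_le {m : ℕ} {A : Matrix (Fin m) (Fin m) ℝ} (hA : A.IsHermitian)
    (s : Set (Fin m)) {c : ℝ} (hc : ∀ j ∈ s, hA.eigenvalues j ≤ c)
    {x : EuclideanSpace ℝ (Fin m)} (hx : x ∈ span ℝ (⇑hA.eigenvectorBasis '' s)) :
    ⟪x, ((WithLp.equiv 2 (Fin m → ℝ)).symm (A.mulVec x))⟫ ≤ c * ⟪x, x⟫ := by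
  classical
  obtain ⟨hvan, hip, hq⟩ := quad_expand hA s hx
  rw [hq, hip, Finset.mul_sum]
  refine Finset.sum_le_sum fun j _ => ?_
  by_cases hj : j ∈ s
  · exact mul_le_mul_of_nonneg_right (hc j hj) (mul_self_nonneg _)
  · simp [hvan j hj]

private lemma quad_ge {m : ℕ} {A : Matrix (Fin m) (Fin m) ℝ} (hA : A.IsHermitian)
    (s : Set (Fin m)) {c : ℝ} (hc : ∀ j ∈ s, c ≤ hA.eigenvalues j)
    {x : EuclideanSpace ℝ (Fin m)} (hx : x ∈ span ℝ (⇑hA.eigenvectorBasis '' s)) :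
    c * ⟪x, x⟫ ≤ ⟪x, ((WithLp.equiv 2 (Fin m → ℝ)).symm (A.mulVec x))⟫ := by
  classical
  obtain ⟨hvan, hip, hq⟩ := quad_expand hA s hx
  rw [hq, hip, Finset.mul_sum]
  refine Finset.sum_le_sum fun j _ => ?_
  by_cases hj : j ∈ s
  · exact mul_le_mul_of_nonneg_right (hc j hj) (mul_self_nonneg _)
  · simp [hvan j hj]

private lemma finrank_span_on {E : Type*} [NormedAddCommGroup E] [InnerProductSpace ℝ E]
    {ι : Type*} [Fintype ι] {v : ι → E} (hv : Orthonormal ℝ v) (s : Finset ι) :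
    Module.finrank ℝ (span ℝ (v '' ↑s)) = s.card := by
  classical
  have h1 : LinearIndependent ℝ (fun j : ↥(↑s : Set ι) => v j) :=
    (hv.comp _ Subtype.val_injective).linearIndependent
  have h2 := finrank_span_eq_card h1
  rw [show Set.range (fun j : ↥(↑s : Set ι) => v j) = v '' ↑s by
    rw [← Set.image_eq_range]] at h2
  rw [h2]
  simp [Fintype.card_coe]

private lemma exists_mem_inf_ne_zero {E : Type*} [NormedAddCommGroup E] [InnerProductSpace ℝ E]
    [FiniteDimensional ℝ E] (S T : Submodule ℝ E)
    (h : Module.finrank ℝ E < Module.finrank ℝ S + Module.finrank ℝ T) :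
    ∃ x : E, x ∈ S ∧ x ∈ T ∧ x ≠ 0 := by
  have h1 := Submodule.finrank_sup_add_finrank_inf_eq S T
  have h2 := Submodule.finrank_le (S ⊔ T)
  have h3 : 0 < Module.finrank ℝ ↥(S ⊓ T) := by omega
  rw [Module.finrank_pos_iff_exists_ne_zero] at h3
  obtain ⟨⟨x, hx⟩, hx0⟩ := h3
  rw [Submodule.mem_inf] at hx
  exact ⟨x, hx.1, hx.2, by simpa [Submodule.coe_eq_zero] using
    (fun h => hx0 (Subtype.ext h) : x = 0 → False)⟩

/-- Extension by zero at position `i0`, as a linear map into `EuclideanSpace`. -/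
private def embed {n : ℕ} (i0 : Fin (n+1)) :
    EuclideanSpace ℝ (Fin n) →ₗ[ℝ] EuclideanSpace ℝ (Fin (n+1)) where
  toFun y := (WithLp.equiv 2 (Fin (n+1) → ℝ)).symm
    (i0.insertNth 0 ((WithLp.equiv 2 (Fin n → ℝ)) y))
  map_add' y z := by
    ext k
    refine Fin.succAboveCases i0 ?_ ?_ k <;>
      simp [Fin.insertNth_apply_same, Fin.insertNth_apply_succAbove]
  map_smul' c y := by
    ext k
    refine Fin.succAboveCases i0 ?_ ?_ k <;>
      simp [Fin.insertNth_apply_same, Fin.insertNth_apply_succAbove]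

private lemma embed_apply_same {n : ℕ} (i0 : Fin (n+1)) (y : EuclideanSpace ℝ (Fin n)) :
    embed i0 y i0 = 0 := by
  simp [embed, Fin.insertNth_apply_same]

private lemma embed_apply_succAbove {n : ℕ} (i0 : Fin (n+1)) (y : EuclideanSpace ℝ (Fin n))
    (j : Fin n) : embed i0 y (i0.succAbove j) = y j := by
  simp [embed, Fin.insertNth_apply_succAbove]

private lemma embed_inner {n : ℕ} (i0 : Fin (n+1)) (y z : EuclideanSpace ℝ (Fin n)) :
    ⟪embed i0 y, embed i0 z⟫ = ⟪y, z⟫ := by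
  simp only [PiLp.inner_apply, RCLike.inner_apply, conj_trivial]
  rw [Fin.sum_univ_succAbove _ i0]
  simp [embed_apply_same, embed_apply_succAbove]

private lemma embed_quad {n : ℕ} (i0 : Fin (n+1)) (A : Matrix (Fin (n+1)) (Fin (n+1)) ℝ)
    (y : EuclideanSpace ℝ (Fin n)) :
    ⟪embed i0 y, ((WithLp.equiv 2 (Fin (n+1) → ℝ)).symm (A.mulVec (embed i0 y)))⟫
      = ⟪y, ((WithLp.equiv 2 (Fin n → ℝ)).symm
          ((A.submatrix i0.succAbove i0.succAbove).mulVec y))⟫ := by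
  have hmv : ∀ j : Fin n, A.mulVec (embed i0 y) (i0.succAbove j)
      = (A.submatrix i0.succAbove i0.succAbove).mulVec y j := by
    intro j
    simp only [Matrix.mulVec, dotProduct, Matrix.submatrix_apply]
    rw [Fin.sum_univ_succAbove _ i0]
    simp [embed_apply_same, embed_apply_succAbove]
  simp only [PiLp.inner_apply, RCLike.inner_apply, conj_trivial,
    WithLp.equiv_symm_apply, PiLp.toLp_apply]
  rw [Fin.sum_univ_succAbove _ i0]
  simp only [embed_apply_same, embed_apply_succAbove, zero_mul, mul_zero, zero_add]
  exact Finset.sum_congr rfl fun j _ => by rw [hmv j]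

private lemma embed_orthonormal {n : ℕ} (i0 : Fin (n+1)) {ι : Type*}
    {v : ι → EuclideanSpace ℝ (Fin n)} (hv : Orthonormal ℝ v) :
    Orthonormal ℝ (fun j => embed i0 (v j)) := by
  classical
  rw [orthonormal_iff_ite] at hv ⊢
  intro i j
  rw [embed_inner]
  exact hv i j

/-- The dimension-counting step: a common nonzero vector. -/
private lemma exists_common {n : ℕ} (A : Matrix (Fin (n+1)) (Fin (n+1)) ℝ)
    (hA : A.IsHermitian) (i0 : Fin (n+1))
    (hB : (A.submatrix i0.succAbove i0.succAbove).IsHermitian)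
    (σ : Equiv.Perm (Fin (n+1))) (τ : Equiv.Perm (Fin n))
    (tA : Finset (Fin (n+1))) (tB : Finset (Fin n))
    (hcard : n + 1 < tB.card + tA.card) :
    ∃ y : EuclideanSpace ℝ (Fin n),
      embed i0 y ≠ 0 ∧
      y ∈ span ℝ (⇑hB.eigenvectorBasis '' (⇑τ '' ↑tB)) ∧
      embed i0 y ∈ span ℝ (⇑hA.eigenvectorBasis '' (⇑σ '' ↑tA)) := by
  classical
  set bA := hA.eigenvectorBasis with hbA
  set bB := hB.eigenvectorBasis with hbB
  set PB := span ℝ (⇑bB '' (⇑τ '' ↑tB)) with hPB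
  set SB := Submodule.map (embed i0) PB with hSB
  set TA := span ℝ (⇑bA '' (⇑σ '' ↑tA)) with hTA
  have hwB : Orthonormal ℝ (fun j => embed i0 (bB (τ j))) :=
    embed_orthonormal i0 (bB.orthonormal.comp _ τ.injective)
  have hSBeq : SB = span ℝ ((fun j => embed i0 (bB (τ j))) '' ↑tB) := by
    rw [hSB, hPB, Submodule.map_span, Set.image_image, Set.image_image]
  have hfSB : Module.finrank ℝ SB = tB.card := by
    rw [hSBeq]; exact finrank_span_on hwB tB
  have huA : Orthonormal ℝ (fun j => bA (σ j)) := bA.orthonormal.comp _ σ.injective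
  have hTAeq : TA = span ℝ ((fun j => bA (σ j)) '' ↑tA) := by
    rw [hTA, Set.image_image]
  have hfTA : Module.finrank ℝ TA = tA.card := by
    rw [hTAeq]; exact finrank_span_on huA tA
  have hdim : Module.finrank ℝ (EuclideanSpace ℝ (Fin (n+1))) = n + 1 := by
    simp [finrank_euclideanSpace]
  obtain ⟨x, hxS, hxT, hx0⟩ := exists_mem_inf_ne_zero SB TA
    (by rw [hdim, hfSB, hfTA]; exact hcard)
  obtain ⟨y, hy, rfl⟩ := Submodule.mem_map.mp hxS
  exact ⟨y, hx0, hy, hxT⟩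

end CauchyInterlacing

theorem stmt_2 {n : ℕ} (A : Matrix (Fin (n+1)) (Fin (n+1)) ℝ) (hA : A.IsHermitian)
    (i0 : Fin (n+1)) (hB : (A.submatrix i0.succAbove i0.succAbove).IsHermitian)
    (lam : Fin (n+1) → ℝ) (mu : Fin n → ℝ)
    (hlam_mono : Monotone lam) (hmu_mono : Monotone mu)
    (hlam : ∃ σ : Equiv.Perm (Fin (n+1)), lam = hA.eigenvalues ∘ σ)
    (hmu : ∃ σ : Equiv.Perm (Fin n), mu = hB.eigenvalues ∘ σ) :
    ∀ i : Fin n, lam i.castSucc ≤ mu i ∧ mu i ≤ lam i.succ := by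
  classical
  obtain ⟨σ, hσ⟩ := hlam
  obtain ⟨τ, hτ⟩ := hmu
  intro i
  have hin : (i : ℕ) < n := i.isLt
  constructor
  · -- lam i.castSucc ≤ mu i
    have hcard : n + 1 < (Finset.Iic i).card + (Finset.Ici i.castSucc).card := by
      rw [Fin.card_Iic, Fin.card_Ici, Fin.coe_castSucc]
      omega
    obtain ⟨y, hx0, hyB, hxT⟩ :=
      exists_common A hA i0 hB σ τ (Finset.Ici i.castSucc) (Finset.Iic i) hcard
    set x := embed i0 y with hxdef
    have hip : (0:ℝ) < ⟪x, x⟫ := by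
      rcases (real_inner_self_nonneg (x := x)).lt_or_eq with h | h
      · exact h
      · exact absurd (inner_self_eq_zero.mp h.symm) hx0
    have h1 : lam i.castSucc * ⟪x, x⟫
        ≤ ⟪x, ((WithLp.equiv 2 (Fin (n+1) → ℝ)).symm (A.mulVec x))⟫ := by
      refine quad_ge hA _ ?_ hxT
      rintro j ⟨j', hj', rfl⟩
      have he : lam j' = hA.eigenvalues (σ j') := congrFun hσ j'
      rw [← he]
      exact hlam_mono (Finset.mem_Ici.mp (Finset.mem_coe.mp hj'))
    have h2 := embed_quad i0 A y
    have h3 : ⟪y, ((WithLp.equiv 2 (Fin n → ℝ)).symm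
        ((A.submatrix i0.succAbove i0.succAbove).mulVec y))⟫ ≤ mu i * ⟪y, y⟫ := by
      refine quad_le hB _ ?_ hyB
      rintro j ⟨j', hj', rfl⟩
      have he : mu j' = hB.eigenvalues (τ j') := congrFun hτ j'
      rw [← he]
      exact hmu_mono (Finset.mem_Iic.mp (Finset.mem_coe.mp hj'))
    have h4 : ⟪y, y⟫ = ⟪x, x⟫ := (embed_inner i0 y y).symm
    have h5 : lam i.castSucc * ⟪x, x⟫ ≤ mu i * ⟪x, x⟫ := by
      calc lam i.castSucc * ⟪x, x⟫
          ≤ ⟪x, ((WithLp.equiv 2 (Fin (n+1) → ℝ)).symm (A.mulVec x))⟫ := h1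
        _ = _ := h2
        _ ≤ mu i * ⟪y, y⟫ := h3
        _ = mu i * ⟪x, x⟫ := by rw [h4]
    exact le_of_mul_le_mul_right h5 hip
  · -- mu i ≤ lam i.succ
    have hcard : n + 1 < (Finset.Ici i).card + (Finset.Iic i.succ).card := by
      rw [Fin.card_Iic, Fin.card_Ici, Fin.val_succ]
      omega
    obtain ⟨y, hx0, hyB, hxT⟩ :=
      exists_common A hA i0 hB σ τ (Finset.Iic i.succ) (Finset.Ici i) hcard
    set x := embed i0 y with hxdef
    have hip : (0:ℝ) < ⟪x, x⟫ := by
      rcases (real_inner_self_nonneg (x := x)).lt_or_eq with h | h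
      · exact h
      · exact absurd (inner_self_eq_zero.mp h.symm) hx0
    have h1 : ⟪x, ((WithLp.equiv 2 (Fin (n+1) → ℝ)).symm (A.mulVec x))⟫
        ≤ lam i.succ * ⟪x, x⟫ := by
      refine quad_le hA _ ?_ hxT
      rintro j ⟨j', hj', rfl⟩
      have he : lam j' = hA.eigenvalues (σ j') := congrFun hσ j'
      rw [← he]
      exact hlam_mono (Finset.mem_Iic.mp (Finset.mem_coe.mp hj'))
    have h2 := embed_quad i0 A y
    have h3 : mu i * ⟪y, y⟫ ≤ ⟪y, ((WithLp.equiv 2 (Fin n → ℝ)).symm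
        ((A.submatrix i0.succAbove i0.succAbove).mulVec y))⟫ := by
      refine quad_ge hB _ ?_ hyB
      rintro j ⟨j', hj', rfl⟩
      have he : mu j' = hB.eigenvalues (τ j') := congrFun hτ j'
      rw [← he]
      exact hmu_mono (Finset.mem_Ici.mp (Finset.mem_coe.mp hj'))
    have h4 : ⟪y, y⟫ = ⟪x, x⟫ := (embed_inner i0 y y).symm
    have h5 : mu i * ⟪x, x⟫ ≤ lam i.succ * ⟪x, x⟫ := by
      calc mu i * ⟪x, x⟫
          = mu i * ⟪y, y⟫ := by rw [h4]
        _ ≤ _ := h3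
        _ = ⟪x, ((WithLp.equiv 2 (Fin (n+1) → ℝ)).symm (A.mulVec x))⟫ := h2.symm
        _ ≤ lam i.succ * ⟪x, x⟫ := h1
    exact le_of_mul_le_mul_right h5 hip
end

section
/- Let F ∈ ℝ[x,y]_d and suppose l_1, ..., l_r are pairwise non-proportional real linear forms with r ≤ d such that the product l_1 ⋯ l_r lies in the apolar ideal (F)^⊥. Then there exist real constants c_1, ..., c_r such that F = Σ_{i=1}^r c_i (l_i)_⊥^d, where (ax+by)_⊥ := bx - ay. -/
open MvPolynomial

/-- The differential operator `∂(f)` applied to `F`: substitute `∂/∂x, ∂/∂y` for the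
variables of `f` and act on `F`.  `f ∈ (F)^⊥` iff `diffOp f F = 0`. -/
noncomputable def diffOp {k : Type*} [CommSemiring k]
    (f F : MvPolynomial (Fin 2) k) : MvPolynomial (Fin 2) k :=
  ∑ m ∈ f.support, f.coeff m •
    ((⇑(pderiv (R := k) (0 : Fin 2)))^[m 0] ((⇑(pderiv (R := k) (1 : Fin 2)))^[m 1] F))


/-- The binary linear form `p.1 * x + p.2 * y`. -/
noncomputable def lin (p : ℝ × ℝ) : MvPolynomial (Fin 2) ℝ :=
  C p.1 * X 0 + C p.2 * X 1

/-- For `l = a x + b y`, the form `l_⊥ = b x - a y`. -/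
noncomputable def lperp (p : ℝ × ℝ) : MvPolynomial (Fin 2) ℝ :=
  C p.2 * X 0 - C p.1 * X 1

namespace ApolarAux


variable {k : Type*} [CommSemiring k]

/-- abbreviation for the basic iterated derivative -/
noncomputable def D (m : Fin 2 →₀ ℕ) (F : MvPolynomial (Fin 2) k) : MvPolynomial (Fin 2) k :=
  (⇑(pderiv (R := k) (0 : Fin 2)))^[m 0] ((⇑(pderiv (R := k) (1 : Fin 2)))^[m 1] F)

lemma iterate_pderiv_add (i : Fin 2) (n : ℕ) (F G : MvPolynomial (Fin 2) k) :
    (⇑(pderiv (R := k) i))^[n] (F + G) =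
      (⇑(pderiv (R := k) i))^[n] F + (⇑(pderiv (R := k) i))^[n] G := by
  induction n generalizing F G with
  | zero => simp
  | succ n ih => simp [Function.iterate_succ_apply, map_add, ih]

lemma iterate_pderiv_smul (i : Fin 2) (n : ℕ) (c : k) (F : MvPolynomial (Fin 2) k) :
    (⇑(pderiv (R := k) i))^[n] (c • F) = c • (⇑(pderiv (R := k) i))^[n] F := by
  induction n generalizing F with
  | zero => simp
  | succ n ih => simp [Function.iterate_succ_apply, ih]

lemma D_add (m : Fin 2 →₀ ℕ) (F G : MvPolynomial (Fin 2) k) :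
    D m (F + G) = D m F + D m G := by
  simp [D, iterate_pderiv_add, iterate_pderiv_smul]

lemma D_smul (m : Fin 2 →₀ ℕ) (c : k) (F : MvPolynomial (Fin 2) k) :
    D m (c • F) = c • D m F := by
  simp [D, iterate_pderiv_smul]

lemma pderiv_comm (i j : Fin 2) (F : MvPolynomial (Fin 2) k) :
    pderiv i (pderiv j F) = pderiv j (pderiv i F) := by
  induction F using MvPolynomial.induction_on' with
  | monomial s a =>
    rcases eq_or_ne i j with rfl | hij
    · rfl
    · simp only [pderiv_monomial]
      rw [Finsupp.tsub_apply, Finsupp.tsub_apply, Finsupp.single_apply, Finsupp.single_apply,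
        if_neg hij, if_neg (fun h => hij h.symm)]
      simp only [Nat.sub_zero]
      rw [tsub_right_comm]
      ring_nf
  | add p q hp hq => simp [map_add, hp, hq]

lemma diffOp_eq_sum (f F : MvPolynomial (Fin 2) k) :
    diffOp f F = (AddMonoidAlgebra.coeff f).sum fun m c => c • D m F := by
  rw [sum_def]; rfl

lemma diffOp_monomial (m : Fin 2 →₀ ℕ) (c : k) (F : MvPolynomial (Fin 2) k) :
    diffOp (monomial m c) F = c • D m F := by
  classical
  show ∑ n ∈ (monomial m c).support, coeff n (monomial m c) • D n F = c • D m F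
  rcases eq_or_ne c 0 with rfl | hc
  · simp [support_monomial]
  · rw [support_monomial, if_neg hc, Finset.sum_singleton, coeff_monomial, if_pos rfl]

lemma diffOp_add_left (f g F : MvPolynomial (Fin 2) k) :
    diffOp (f + g) F = diffOp f F + diffOp g F := by
  simp only [diffOp_eq_sum]
  rw [AddMonoidAlgebra.coeff_add]; exact Finsupp.sum_add_index' (by simp) (by intros; rw [add_smul])

lemma diffOp_add_right (f F G : MvPolynomial (Fin 2) k) :
    diffOp f (F + G) = diffOp f F + diffOp f G := by
  simp only [diffOp_eq_sum, Finsupp.sum, D_add, smul_add, Finset.sum_add_distrib]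

lemma diffOp_smul_right (f : MvPolynomial (Fin 2) k) (c : k) (F : MvPolynomial (Fin 2) k) :
    diffOp f (c • F) = c • diffOp f F := by
  simp only [diffOp_eq_sum, Finsupp.sum, D_smul, Finset.smul_sum, smul_comm c]

lemma D_D (m n : Fin 2 →₀ ℕ) (F : MvPolynomial (Fin 2) k) :
    D (m + n) F = D m (D n F) := by
  have hc : Function.Commute (⇑(pderiv (R := k) (0 : Fin 2))) (⇑(pderiv (R := k) (1 : Fin 2))) :=
    fun F => pderiv_comm 0 1 F
  simp only [D, Finsupp.add_apply, Function.iterate_add_apply]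
  congr 1
  exact ((hc.iterate_left (n 0)).iterate_right (m 1)) _

lemma diffOp_mul (f g F : MvPolynomial (Fin 2) k) :
    diffOp (f * g) F = diffOp f (diffOp g F) := by
  induction f using MvPolynomial.induction_on' with
  | add f1 f2 ih1 ih2 => rw [add_mul, diffOp_add_left, diffOp_add_left, ih1, ih2]
  | monomial m c =>
    induction g using MvPolynomial.induction_on' with
    | add g1 g2 ih1 ih2 =>
      rw [mul_add, diffOp_add_left, ih1, ih2, diffOp_add_left g1 g2 F, diffOp_add_right]
    | monomial n e =>
      rw [monomial_mul, diffOp_monomial, diffOp_monomial, diffOp_monomial, D_smul, D_D,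
        mul_smul]



lemma coeff_pderiv {k : Type*} [CommSemiring k] (i : Fin 2) (m : Fin 2 →₀ ℕ)
    (F : MvPolynomial (Fin 2) k) :
    coeff m (pderiv i F) = (m i + 1) * coeff (m + Finsupp.single i 1) F := by
  classical
  induction F using MvPolynomial.induction_on' with
  | add p q hp hq => simp [map_add, coeff_add, hp, hq, mul_add]
  | monomial s a =>
    rw [pderiv_monomial, coeff_monomial, coeff_monomial]
    rcases eq_or_ne s (m + Finsupp.single i 1) with rfl | hs
    · rw [if_pos rfl, if_pos (by rw [add_tsub_cancel_right])]
      simp [mul_comm]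
    · rw [if_neg hs]
      rcases eq_or_ne (s - Finsupp.single i 1) m with he | he
      · rw [if_pos he, mul_zero]
        have hsi : s i = 0 := by
          by_contra hne
          apply hs
          rw [← he, tsub_add_cancel_of_le]
          · exact Finsupp.single_le_iff.mpr (by omega)
        simp [hsi]
      · rw [if_neg he, mul_zero]

lemma weight_one_fin2 (m : Fin 2 →₀ ℕ) : Finsupp.weight 1 m = m 0 + m 1 := by
  rw [show Finsupp.weight 1 m = Finsupp.degree m from
      (DFunLike.congr_fun (Finsupp.degree_eq_weight_one (σ := Fin 2) (R := ℕ)) m).symm,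
    Finsupp.degree_apply,
    Finset.sum_subset (Finset.subset_univ m.support)
      (fun x _ hx => Finsupp.notMem_support_iff.mp hx), Fin.sum_univ_two]

lemma isHom_iff {G : MvPolynomial (Fin 2) ℝ} {n : ℕ} :
    G.IsHomogeneous n ↔ ∀ m : Fin 2 →₀ ℕ, coeff m G ≠ 0 → m 0 + m 1 = n :=
  ⟨fun h m hm => by rw [← weight_one_fin2]; exact h hm,
   fun h d hd => by rw [weight_one_fin2]; exact h d hd⟩

lemma fin2_eq_single_add_single (m : Fin 2 →₀ ℕ) :
    m = Finsupp.single 0 (m 0) + Finsupp.single 1 (m 1) := by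
  ext x
  fin_cases x <;> simp [Finsupp.single_apply]

lemma IsHomogeneous.pderiv' {d : ℕ} {G : MvPolynomial (Fin 2) ℝ} (hG : G.IsHomogeneous d)
    (i : Fin 2) : (pderiv i G).IsHomogeneous (d - 1) := by
  rw [isHom_iff] at hG ⊢
  intro m hm
  rw [coeff_pderiv] at hm
  have h2 : coeff (m + Finsupp.single i 1) G ≠ 0 := by
    intro h; rw [h, mul_zero] at hm; exact hm rfl
  have h3 := hG _ h2
  simp only [Finsupp.add_apply, Finsupp.single_apply] at h3
  fin_cases i <;> simp at h3 <;> omega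

lemma binary_term_eq (u v : ℝ) (n k : ℕ) :
    (C u * X 0) ^ k * (C v * X 1) ^ (n - k) * (n.choose k : MvPolynomial (Fin 2) ℝ)
      = monomial (Finsupp.single 0 k + Finsupp.single 1 (n - k))
          ((n.choose k : ℝ) * (u ^ k * v ^ (n - k))) := by
  rw [mul_pow, mul_pow, ← C_pow, ← C_pow, X_pow_eq_monomial, X_pow_eq_monomial,
    ← C_eq_coe_nat, C_mul_monomial, C_mul_monomial, monomial_mul, mul_comm _ (C _),
    C_mul_monomial]
  congr 1
  ring

lemma coeff_binary_pow (u v : ℝ) (n j : ℕ) (hj : j ≤ n) :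
    coeff (Finsupp.single 0 j + Finsupp.single 1 (n - j))
      ((C u * X 0 + C v * X 1 : MvPolynomial (Fin 2) ℝ) ^ n)
      = n.choose j * u ^ j * v ^ (n - j) := by
  rw [add_pow, MvPolynomial.coeff_sum, Finset.sum_eq_single j]
  · rw [binary_term_eq, coeff_monomial, if_pos rfl]; ring
  · intro k hk hkj
    rw [binary_term_eq, coeff_monomial, if_neg, ]
    intro h
    have := DFunLike.congr_fun h (0 : Fin 2)
    simp [Finsupp.single_apply] at this
    exact hkj this
  · intro h; exact absurd (Finset.mem_range.mpr (by omega)) h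

lemma isHomogeneous_binary (u v : ℝ) :
    (C u * X 0 + C v * X 1 : MvPolynomial (Fin 2) ℝ).IsHomogeneous 1 := by
  apply MvPolynomial.IsHomogeneous.add <;>
    simpa using (isHomogeneous_C (Fin 2) _).mul (isHomogeneous_X ℝ _)

lemma coeff_C_mul_binary_pow (c u v : ℝ) (d : ℕ) (m : Fin 2 →₀ ℕ) :
    coeff m (C c * (C u * X 0 + C v * X 1) ^ d)
      = if m 0 + m 1 = d then c * (d.choose (m 0) * u ^ (m 0) * v ^ (m 1)) else 0 := by
  rw [coeff_C_mul]
  split_ifs with hm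
  · conv_lhs => rw [fin2_eq_single_add_single m]
    rw [show m 1 = d - m 0 by omega, coeff_binary_pow u v d (m 0) (by omega)]
  · have h1 : (C u * X 0 + C v * X 1 : MvPolynomial (Fin 2) ℝ).IsHomogeneous 1 := by
      apply MvPolynomial.IsHomogeneous.add <;>
        simpa using (isHomogeneous_C (Fin 2) _).mul (isHomogeneous_X ℝ _)
    have hhom : ((C u * X 0 + C v * X 1 : MvPolynomial (Fin 2) ℝ) ^ d).IsHomogeneous d := by
      simpa using h1.pow d
    have : coeff m ((C u * X 0 + C v * X 1 : MvPolynomial (Fin 2) ℝ) ^ d) = 0 := by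
      by_contra hc
      exact hm (isHom_iff.mp hhom m hc)
    rw [this, mul_zero]

lemma ker_lin {d : ℕ} {a b : ℝ} (hab : ¬(a = 0 ∧ b = 0)) {G : MvPolynomial (Fin 2) ℝ}
    (hG : G.IsHomogeneous d)
    (h : C a * pderiv 0 G + C b * pderiv 1 G = 0) :
    ∃ c : ℝ, G = C c * (C b * X 0 + C (-a) * X 1) ^ d := by
  set g : ℕ → ℝ := fun k => coeff (Finsupp.single 0 k + Finsupp.single 1 (d - k)) G with hg
  have hgfold : ∀ k, coeff (Finsupp.single 0 k + Finsupp.single 1 (d - k)) G = g k :=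
    fun _ => rfl
  have hcoe : ∀ m : Fin 2 →₀ ℕ, m 0 + m 1 = d → coeff m G = g (m 0) := by
    intro m hm
    conv_lhs => rw [fin2_eq_single_add_single m]
    rw [show m 1 = d - m 0 by omega]
  have key : ∀ k : ℕ, k < d →
      a * ((k : ℝ) + 1) * g (k + 1) + b * ((d - k : ℕ) : ℝ) * g k = 0 := by
    intro k hk
    have h0 := congrArg (coeff (Finsupp.single 0 k + Finsupp.single 1 (d - 1 - k))) h
    have e2 : Finsupp.single (0 : Fin 2) k + Finsupp.single 1 (d - 1 - k) +
        Finsupp.single (0 : Fin 2) (1 : ℕ)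
        = Finsupp.single (0 : Fin 2) (k + 1) + Finsupp.single 1 (d - (k + 1)) := by
      ext x; fin_cases x <;> simp [Finsupp.single_apply] <;> omega
    have e3 : Finsupp.single (0 : Fin 2) k + Finsupp.single 1 (d - 1 - k) +
        Finsupp.single (1 : Fin 2) (1 : ℕ)
        = Finsupp.single (0 : Fin 2) k + Finsupp.single 1 (d - k) := by
      ext x; fin_cases x <;> simp [Finsupp.single_apply] <;> omega
    rw [coeff_add, coeff_C_mul, coeff_C_mul, coeff_pderiv, coeff_pderiv, coeff_zero,
      e2, e3, hgfold, hgfold] at h0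
    simp only [Finsupp.add_apply, Finsupp.single_apply] at h0
    norm_num at h0
    have hcast : ((d - 1 - k : ℕ) : ℝ) + 1 = ((d - k : ℕ) : ℝ) := by
      exact_mod_cast congrArg (Nat.cast : ℕ → ℝ) (by omega : d - 1 - k + 1 = d - k)
    linear_combination h0 - b * g k * hcast
  rcases eq_or_ne a 0 with rfl | ha
  · have hb : b ≠ 0 := fun h' => hab ⟨rfl, h'⟩
    have hzero : ∀ k, k < d → g k = 0 := by
      intro k hk
      have h0 := key k hk
      have hd : ((d - k : ℕ) : ℝ) ≠ 0 := by
        exact_mod_cast Nat.sub_ne_zero_of_lt hk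
      simp only [zero_mul, zero_add] at h0
      rcases mul_eq_zero.mp h0 with h' | h'
      · exact absurd (mul_eq_zero.mp h') (by push_neg; exact ⟨hb, hd⟩)
      · exact h'
    refine ⟨g d / b ^ d, ?_⟩
    apply MvPolynomial.ext
    intro m
    rw [coeff_C_mul_binary_pow]
    split_ifs with hm
    · rw [hcoe m hm]
      rcases eq_or_ne (m 0) d with h0 | h0
      · have h1 : m 1 = 0 := by omega
        rw [h0, h1, neg_zero, pow_zero, Nat.choose_self]
        field_simp
        simp
      · rw [hzero _ (by omega), neg_zero, zero_pow (by omega : m 1 ≠ 0)]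
        ring
    · by_contra hc
      exact hm (isHom_iff.mp hG m hc)
  · have claim : ∀ k, k ≤ d →
        g k * (-a) ^ d = g 0 * (d.choose k) * b ^ k * (-a) ^ (d - k) := by
      intro k
      induction k with
      | zero => intro _; simp
      | succ k ih =>
        intro hk1
        have hk : k < d := by omega
        have hih := ih (by omega)
        have hrec := key k hk
        have hcomb : ((k : ℝ) + 1) * (d.choose (k + 1)) = ((d - k : ℕ) : ℝ) * d.choose k := by
          have h1 : ((d.choose (k + 1) * (k + 1) : ℕ) : ℝ) = ((d.choose k * (d - k) : ℕ) : ℝ) :=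
            congrArg _ (Nat.choose_succ_right_eq d k)
          push_cast [Nat.cast_mul] at h1
          linear_combination h1
        have hsplit : (-a : ℝ) ^ (d - k) = -a * (-a) ^ (d - (k + 1)) := by
          rw [← pow_succ']
          congr 1
          omega
        rw [hsplit] at hih
        have hcancel : (a * ((k : ℝ) + 1)) * (g (k + 1) * (-a) ^ d)
            = (a * ((k : ℝ) + 1)) *
              (g 0 * (d.choose (k + 1)) * b ^ (k + 1) * (-a) ^ (d - (k + 1))) := by
          linear_combination ((-a) ^ d) * hrec + (-(b * ((d - k : ℕ) : ℝ))) * hih +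
            (-(a * g 0 * b ^ (k + 1) * (-a) ^ (d - (k + 1)))) * hcomb
        refine mul_left_cancel₀ ?_ hcancel
        intro h'
        rcases mul_eq_zero.mp h' with h'' | h''
        · exact ha h''
        · have : (0:ℝ) < (k : ℝ) + 1 := by positivity
          linarith
    have had : (-a : ℝ) ^ d ≠ 0 := pow_ne_zero _ (neg_ne_zero.mpr ha)
    refine ⟨g 0 / (-a) ^ d, ?_⟩
    apply MvPolynomial.ext
    intro m
    rw [coeff_C_mul_binary_pow]
    split_ifs with hm
    · rw [hcoe m hm, show m 1 = d - m 0 by omega, div_mul_eq_mul_div, eq_div_iff had]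
      linear_combination claim (m 0) (by omega)
    · by_contra hc
      exact hm (isHom_iff.mp hG m hc)

lemma diffOp_one {k : Type} [CommSemiring k] (F : MvPolynomial (Fin 2) k) : diffOp 1 F = F := by
  have : (1 : MvPolynomial (Fin 2) k) = monomial 0 1 := by simp
  rw [this, diffOp_monomial, one_smul, D]
  simp

lemma diffOp_lin (p : ℝ × ℝ) (F : MvPolynomial (Fin 2) ℝ) :
    diffOp (lin p) F = C p.1 * pderiv 0 F + C p.2 * pderiv 1 F := by
  rw [lin, C_mul_X_eq_monomial, C_mul_X_eq_monomial, diffOp_add_left, diffOp_monomial,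
    diffOp_monomial, smul_eq_C_mul, smul_eq_C_mul, D, D]
  simp [Finsupp.single_apply]

lemma pderiv_lperp_0 (q : ℝ × ℝ) : pderiv 0 (lperp q) = C q.2 := by
  simp [lperp, pderiv_X]

lemma pderiv_lperp_1 (q : ℝ × ℝ) : pderiv 1 (lperp q) = -C q.1 := by
  simp [lperp, pderiv_X]

lemma diffOp_lin_lperp_pow (p q : ℝ × ℝ) (n : ℕ) :
    diffOp (lin p) (lperp q ^ n)
      = C ((n : ℝ) * (p.1 * q.2 - p.2 * q.1)) * lperp q ^ (n - 1) := by
  rw [diffOp_lin, pderiv_pow, pderiv_pow, pderiv_lperp_0, pderiv_lperp_1,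
    show ((n : MvPolynomial (Fin 2) ℝ)) = C (n : ℝ) from (C_eq_coe_nat n).symm]
  rw [show C ((n:ℝ) * (p.1 * q.2 - p.2 * q.1)) = C (n:ℝ) * (C p.1 * C q.2 - C p.2 * C q.1) by
    rw [map_mul, map_sub, map_mul, map_mul]]
  ring

lemma isHomogeneous_lperp_pow (q : ℝ × ℝ) (n : ℕ) : (lperp q ^ n).IsHomogeneous n := by
  have h1 : (lperp q).IsHomogeneous 1 := by
    apply MvPolynomial.IsHomogeneous.sub <;>
      simpa using (isHomogeneous_C (Fin 2) _).mul (isHomogeneous_X ℝ _)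
  simpa using h1.pow n

lemma lperp_eq (q : ℝ × ℝ) : lperp q = C q.2 * X 0 + C (-q.1) * X 1 := by
  rw [lperp, map_neg, neg_mul, sub_eq_add_neg]


end ApolarAux

open ApolarAux in
theorem stmt_7 {d r : ℕ} (F : MvPolynomial (Fin 2) ℝ) (hF : F.IsHomogeneous d)
    (l : Fin r → ℝ × ℝ) (hl : ∀ i, l i ≠ 0)
    (hdist : ∀ i j, i ≠ j → (l i).1 * (l j).2 ≠ (l i).2 * (l j).1)
    (hrd : r ≤ d)
    (hmem : diffOp (∏ i, lin (l i)) F = 0) :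
    ∃ c : Fin r → ℝ, F = ∑ i, C (c i) * (lperp (l i)) ^ d := by
  induction r generalizing d F with
  | zero =>
    refine ⟨0, ?_⟩
    rw [Finset.univ_eq_empty, Finset.sum_empty]
    rw [Finset.univ_eq_empty, Finset.prod_empty, diffOp_one] at hmem
    exact hmem
  | succ r ih =>
    set a := (l 0).1 with hadef
    set b := (l 0).2 with hbdef
    have hd1 : 1 ≤ d := le_trans (by omega) hrd
    -- the derivative polynomial
    set H := C a * pderiv 0 F + C b * pderiv 1 F with hHdef
    have hHhom : H.IsHomogeneous (d - 1) := by
      apply MvPolynomial.IsHomogeneous.add <;>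
        simpa using (isHomogeneous_C (Fin 2) _).mul (IsHomogeneous.pderiv' hF _)
    have hHmem : diffOp (∏ i : Fin r, lin (l i.succ)) H = 0 := by
      have h' := hmem
      rw [Fin.prod_univ_succ, mul_comm, diffOp_mul, diffOp_lin] at h'
      exact h'
    obtain ⟨c', hc'⟩ := ih H hHhom (fun i => l i.succ) (fun i => hl i.succ)
      (fun i j hij => hdist i.succ j.succ (by simpa using hij)) (by omega) hHmem
    -- particular solution
    have hne : ∀ i : Fin r, (d : ℝ) * (a * (l i.succ).2 - b * (l i.succ).1) ≠ 0 := by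
      intro i
      apply mul_ne_zero
      · exact Nat.cast_ne_zero.mpr (by omega)
      · exact sub_ne_zero.mpr (hdist 0 i.succ (Fin.succ_ne_zero i).symm)
    set e : Fin r → ℝ := fun i => c' i / ((d : ℝ) * (a * (l i.succ).2 - b * (l i.succ).1))
      with hedef
    set P : MvPolynomial (Fin 2) ℝ := ∑ i : Fin r, C (e i) * lperp (l i.succ) ^ d with hPdef
    have hPhom : P.IsHomogeneous d := by
      apply MvPolynomial.IsHomogeneous.sum
      intro i _
      simpa using (isHomogeneous_C (Fin 2) (e i)).mul (isHomogeneous_lperp_pow (l i.succ) d)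
    have hdP : C a * pderiv 0 P + C b * pderiv 1 P = H := by
      have h1 : C a * pderiv 0 P + C b * pderiv 1 P = diffOp (lin (l 0)) P := by
        rw [diffOp_lin]
      rw [h1, hPdef]
      have h2 : diffOp (lin (l 0)) (∑ i : Fin r, C (e i) * lperp (l i.succ) ^ d)
          = ∑ i : Fin r, C (e i) * diffOp (lin (l 0)) (lperp (l i.succ) ^ d) := by
        rw [diffOp_lin, map_sum, map_sum, Finset.mul_sum, Finset.mul_sum,
          ← Finset.sum_add_distrib]
        refine Finset.sum_congr rfl fun i _ => ?_
        rw [diffOp_lin, pderiv_C_mul, pderiv_C_mul]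
        ring
      rw [h2, hc']
      refine Finset.sum_congr rfl fun i _ => ?_
      rw [diffOp_lin_lperp_pow, ← mul_assoc, ← map_mul]
      congr 2
      rw [hedef]
      exact div_mul_cancel₀ (c' i) (hne i)
    have hGhom : (F - P).IsHomogeneous d := hF.sub hPhom
    have hGker : C a * pderiv 0 (F - P) + C b * pderiv 1 (F - P) = 0 := by
      rw [map_sub, map_sub]
      rw [hHdef] at hdP
      ring_nf
      ring_nf at hdP
      linear_combination -hdP
    have hab : ¬(a = 0 ∧ b = 0) := by
      rintro ⟨h1, h2⟩
      exact hl 0 (Prod.ext h1 h2)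
    obtain ⟨c0, hc0⟩ := ker_lin hab hGhom hGker
    refine ⟨Fin.cons c0 e, ?_⟩
    rw [Fin.sum_univ_succ]
    simp only [Fin.cons_zero, Fin.cons_succ]
    have : F = (F - P) + P := by ring
    rw [this, hc0, ← hPdef, ← lperp_eq (l 0)]
end

section
/- Let F ∈ ℝ[x,y]_d and l a real linear form with l² ∈ (F)^⊥ and 2 ≤ d. Then there exist c_0, c_1 ∈ ℝ with F = c_0 (l_⊥)^d + c_1 l (l_⊥)^{d-1}, where (ax+by)_⊥ := bx - ay. -/
open MvPolynomial

lemma degree_two (m : Fin 2 →₀ ℕ) : m.degree = m 0 + m 1 := by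
  rw [Finsupp.degree_apply,
    Finset.sum_subset (Finset.subset_univ _) (fun i _ hi => Finsupp.notMem_support_iff.mp hi),
    Fin.sum_univ_two]

lemma X_mul_pderiv_monomial (i : Fin 2) (m : Fin 2 →₀ ℕ) (c : ℝ) :
    X i * pderiv i (monomial m c) = monomial m (c * m i) := by
  rw [pderiv_monomial]
  rcases Nat.eq_zero_or_pos (m i) with h | h
  · simp [h]
  · have hm : Finsupp.single i 1 + (m - Finsupp.single i 1) = m := by
      ext j
      rcases eq_or_ne i j with rfl | hij
      · simp only [Finsupp.add_apply, Finsupp.tsub_apply, Finsupp.single_eq_same]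
        omega
      · simp [Finsupp.single_apply, hij]
    rw [X, monomial_mul, one_mul, hm]

lemma euler2 (n : ℕ) (φ : MvPolynomial (Fin 2) ℝ) (h : φ.IsHomogeneous n) :
    (n : ℝ) • φ = X 0 * pderiv 0 φ + X 1 * pderiv 1 φ := by
  conv_lhs => rw [← support_sum_monomial_coeff φ]
  conv_rhs => rw [← support_sum_monomial_coeff φ]
  rw [Finset.smul_sum, map_sum (pderiv 0), map_sum (pderiv 1), Finset.mul_sum, Finset.mul_sum,
    ← Finset.sum_add_distrib]
  refine Finset.sum_congr rfl fun m hm => ?_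
  rw [X_mul_pderiv_monomial, X_mul_pderiv_monomial, smul_monomial, ← map_add (monomial m)]
  have hdeg : m.degree = n := by
    by_contra hne
    exact MvPolynomial.mem_support_iff.mp hm (h.coeff_eq_zero hne)
  rw [degree_two] at hdeg
  congr 1
  rw [← hdeg, smul_eq_mul]
  push_cast
  ring

lemma hom_pderiv {n : ℕ} (i : Fin 2) (φ : MvPolynomial (Fin 2) ℝ) (h : φ.IsHomogeneous n) :
    (pderiv i φ).IsHomogeneous (n - 1) := by
  conv => enter [1]; rw [← support_sum_monomial_coeff φ, map_sum]
  apply MvPolynomial.IsHomogeneous.sum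
  intro m hm
  rw [pderiv_monomial]
  rcases Nat.eq_zero_or_pos (m i) with h0 | h0
  · rw [h0]
    push_cast
    rw [mul_zero, map_zero]
    exact isHomogeneous_zero _ _ _
  · apply isHomogeneous_monomial
    have hdeg : m.degree = n := by
      by_contra hne
      exact MvPolynomial.mem_support_iff.mp hm (h.coeff_eq_zero hne)
    rw [degree_two] at hdeg
    fin_cases i <;>
    · rw [degree_two, Finsupp.tsub_apply, Finsupp.tsub_apply]
      simp only [Finsupp.single_apply, Fin.mk_zero, Fin.mk_one, Fin.isValue] at h0 ⊢
      norm_num at h0 ⊢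
      omega

lemma diffOp_eq_sum_subset (f F : MvPolynomial (Fin 2) ℝ) (S : Finset (Fin 2 →₀ ℕ))
    (hS : f.support ⊆ S) :
    diffOp f F = ∑ m ∈ S, f.coeff m •
      ((⇑(pderiv (R := ℝ) (0 : Fin 2)))^[m 0] ((⇑(pderiv (R := ℝ) (1 : Fin 2)))^[m 1] F)) :=
  Finset.sum_subset hS (fun m _ hm => by
    rw [MvPolynomial.notMem_support_iff.mp hm, zero_smul])

lemma diffOp_add (f g F : MvPolynomial (Fin 2) ℝ) :
    diffOp (f + g) F = diffOp f F + diffOp g F := by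
  classical
  rw [diffOp_eq_sum_subset (f + g) F (f.support ∪ g.support) (MvPolynomial.support_add),
    diffOp_eq_sum_subset f F (f.support ∪ g.support) Finset.subset_union_left,
    diffOp_eq_sum_subset g F (f.support ∪ g.support) Finset.subset_union_right,
    ← Finset.sum_add_distrib]
  exact Finset.sum_congr rfl fun m _ => by rw [coeff_add, add_smul]

lemma diffOp_monomial (m : Fin 2 →₀ ℕ) (c : ℝ) (F : MvPolynomial (Fin 2) ℝ) :
    diffOp (monomial m c) F = c •
      ((⇑(pderiv (R := ℝ) (0 : Fin 2)))^[m 0] ((⇑(pderiv (R := ℝ) (1 : Fin 2)))^[m 1] F)) := by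
  classical
  rcases eq_or_ne c 0 with rfl | hc
  · simp [diffOp]
  · rw [diffOp, support_monomial, if_neg hc, Finset.sum_singleton, coeff_monomial, if_pos rfl]

lemma lin_sq (p : ℝ × ℝ) : (lin p) ^ 2 =
    monomial (Finsupp.single (0 : Fin 2) 2) (p.1 ^ 2)
      + (monomial (Finsupp.single (0 : Fin 2) 1 + Finsupp.single (1 : Fin 2) 1) (2 * p.1 * p.2)
        + monomial (Finsupp.single (1 : Fin 2) 2) (p.2 ^ 2)) := by
  have h11 : monomial (Finsupp.single (0 : Fin 2) 1 + Finsupp.single 1 1) (2 * p.1 * p.2)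
      = C (2 * p.1 * p.2) * (X 0 * X 1) := by
    have := monomial_mul (σ := Fin 2) (R := ℝ) (s := Finsupp.single 0 1)
      (s' := Finsupp.single 1 1) (a := 2 * p.1 * p.2) (b := 1)
    rw [mul_one] at this
    rw [← this, ← C_mul_X_pow_eq_monomial, ← C_mul_X_pow_eq_monomial, map_one, one_mul,
      pow_one, pow_one]
    ring
  rw [← C_mul_X_pow_eq_monomial, ← C_mul_X_pow_eq_monomial, h11, lin]
  simp only [map_mul, map_pow, map_ofNat]
  ring

lemma diffOp_lin_sq (p : ℝ × ℝ) (F : MvPolynomial (Fin 2) ℝ) :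
    diffOp ((lin p) ^ 2) F = C (p.1 ^ 2) * pderiv 0 (pderiv 0 F)
      + C (2 * p.1 * p.2) * pderiv 0 (pderiv 1 F) + C (p.2 ^ 2) * pderiv 1 (pderiv 1 F) := by
  rw [lin_sq, diffOp_add, diffOp_add, diffOp_monomial, diffOp_monomial, diffOp_monomial]
  have it2 : ∀ (i : Fin 2) (G : MvPolynomial (Fin 2) ℝ),
      (⇑(pderiv (R := ℝ) i))^[2] G = pderiv i (pderiv i G) := fun i G => by
    rw [show ((⇑(pderiv (R := ℝ) i))^[2] G) = (⇑(pderiv (R := ℝ) i))^[1 + 1] G from rfl,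
      Function.iterate_add_apply, Function.iterate_one]
  have e1 : (Finsupp.single (0 : Fin 2) 2) 0 = 2 := Finsupp.single_eq_same
  have e2 : (Finsupp.single (0 : Fin 2) 2) 1 = 0 := Finsupp.single_eq_of_ne (by decide)
  have e3 : ((Finsupp.single (0 : Fin 2) 1 + Finsupp.single 1 1) : Fin 2 →₀ ℕ) 0 = 1 := by
    rw [Finsupp.add_apply, Finsupp.single_eq_same, Finsupp.single_eq_of_ne (by decide), add_zero]
  have e4 : ((Finsupp.single (0 : Fin 2) 1 + Finsupp.single 1 1) : Fin 2 →₀ ℕ) 1 = 1 := by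
    rw [Finsupp.add_apply, Finsupp.single_eq_same, Finsupp.single_eq_of_ne (by decide), zero_add]
  have e5 : (Finsupp.single (1 : Fin 2) 2) 0 = 0 := Finsupp.single_eq_of_ne (by decide)
  have e6 : (Finsupp.single (1 : Fin 2) 2) 1 = 2 := Finsupp.single_eq_same
  simp only [e1, e2, e3, e4, e5, e6]
  simp only [it2, Function.iterate_one, Function.iterate_zero_apply, smul_eq_C_mul]
  ring

lemma lperp_ne_zero {p : ℝ × ℝ} (hp : p ≠ 0) : lperp p ≠ 0 := by
  intro h
  apply hp
  have h1 := congrArg (eval ![(1 : ℝ), 0]) h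
  have h2 := congrArg (eval ![(0 : ℝ), 1]) h
  simp [lperp] at h1 h2
  exact Prod.ext_iff.mpr ⟨h2, h1⟩

lemma eq_C_of_hom0 (G : MvPolynomial (Fin 2) ℝ) (h : G.IsHomogeneous 0) :
    G = C (coeff 0 G) := by
  ext m
  rcases eq_or_ne m 0 with rfl | hm
  · simp
  · rw [h.coeff_eq_zero (by rwa [Ne, Finsupp.degree_eq_zero_iff]), coeff_C,
      if_neg (fun hh => hm hh.symm)]

lemma pd_comm (i j : Fin 2) (f : MvPolynomial (Fin 2) ℝ) :
    pderiv i (pderiv j f) = pderiv j (pderiv i f) := by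
  rcases eq_or_ne i j with rfl | hij
  · rfl
  induction f using MvPolynomial.induction_on' with
  | add p q hp hq => simp [hp, hq]
  | monomial s a =>
    simp only [pderiv_monomial]
    have h1 : (s - Finsupp.single j 1 : Fin 2 →₀ ℕ) i = s i := by
      simp [Finsupp.tsub_apply, Finsupp.single_apply, (Ne.symm hij)]
    have h2 : (s - Finsupp.single i 1 : Fin 2 →₀ ℕ) j = s j := by
      simp [Finsupp.tsub_apply, Finsupp.single_apply, hij]
    rw [h1, h2, tsub_tsub, tsub_tsub, add_comm (Finsupp.single j 1)]
    congr 1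
    ring

lemma ker_D (p : ℝ × ℝ) (hp : p ≠ 0) : ∀ (e : ℕ) (G : MvPolynomial (Fin 2) ℝ),
    G.IsHomogeneous e → C p.1 * pderiv 0 G + C p.2 * pderiv 1 G = 0 →
    ∃ c : ℝ, G = C c * lperp p ^ e := by
  intro e
  induction e with
  | zero =>
    intro G hG _
    exact ⟨coeff 0 G, by rw [pow_zero, mul_one]; exact eq_C_of_hom0 G hG⟩
  | succ e ih =>
    intro G hG hD
    have hdx : C p.1 * pderiv 0 (pderiv 0 G) + C p.2 * pderiv 1 (pderiv 0 G) = 0 := by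
      have h := congrArg (pderiv 0) hD
      rw [map_add, map_zero, pderiv_C_mul, pderiv_C_mul, pd_comm 0 1] at h
      exact h
    have hdy : C p.1 * pderiv 0 (pderiv 1 G) + C p.2 * pderiv 1 (pderiv 1 G) = 0 := by
      have h := congrArg (pderiv 1) hD
      rw [map_add, map_zero, pderiv_C_mul, pderiv_C_mul, pd_comm 1 0] at h
      exact h
    obtain ⟨cx, hx⟩ := ih (pderiv 0 G) (by simpa using hom_pderiv 0 G hG) hdx
    obtain ⟨cy, hy⟩ := ih (pderiv 1 G) (by simpa using hom_pderiv 1 G hG) hdy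
    have hsum : p.1 * cx + p.2 * cy = 0 := by
      rw [hx, hy] at hD
      have h : C (p.1 * cx + p.2 * cy) * lperp p ^ e = 0 := by
        rw [map_add, map_mul, map_mul]
        linear_combination hD
      rcases mul_eq_zero.mp h with h' | h'
      · exact C_eq_zero.mp h'
      · exact absurd h' (pow_ne_zero e (lperp_ne_zero hp))
    have hab : p.1 ≠ 0 ∨ p.2 ≠ 0 := by
      by_contra hcon
      push_neg at hcon
      exact hp (Prod.ext_iff.mpr ⟨hcon.1, hcon.2⟩)
    obtain ⟨t, htx, hty⟩ : ∃ t : ℝ, cx = t * p.2 ∧ cy = -(t * p.1) := by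
      rcases hab with ha | hb
      · refine ⟨-cy / p.1, ?_, ?_⟩
        · field_simp
          linear_combination hsum
        · field_simp
      · refine ⟨cx / p.2, ?_, ?_⟩
        · field_simp
        · field_simp
          linear_combination hsum
    have h2 : ((e + 1 : ℕ) : ℝ) • G = C t * lperp p ^ (e + 1) := by
      rw [euler2 (e + 1) G hG, hx, hy, htx, hty, lperp, map_mul, map_neg, map_mul]
      ring
    have hne : ((e : ℝ) + 1) ≠ 0 := by positivity
    refine ⟨t / ((e : ℝ) + 1), ?_⟩
    have h3 : C ((e : ℝ) + 1) * G = C ((e : ℝ) + 1) * (C (t / ((e : ℝ) + 1)) * lperp p ^ (e + 1)) := by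
      rw [← smul_eq_C_mul, show ((e : ℝ) + 1) = ((e + 1 : ℕ) : ℝ) by push_cast; ring, h2,
        ← mul_assoc, ← map_mul]
      congr 1
      push_cast
      field_simp
    exact mul_left_cancel₀ (fun hh => hne (C_eq_zero.mp hh)) h3
theorem stmt_8 {d : ℕ} (hd : 2 ≤ d) (F : MvPolynomial (Fin 2) ℝ) (hF : F.IsHomogeneous d)
    (p : ℝ × ℝ) (hp : p ≠ 0) (hmem : diffOp ((lin p) ^ 2) F = 0) :
    ∃ c0 c1 : ℝ, F = C c0 * (lperp p) ^ d + C c1 * (lin p * (lperp p) ^ (d - 1)) := by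
  have hmain : C (p.1 ^ 2) * pderiv 0 (pderiv 0 F) + C (2 * p.1 * p.2) * pderiv 0 (pderiv 1 F)
      + C (p.2 ^ 2) * pderiv 1 (pderiv 1 F) = 0 := by
    rw [← diffOp_lin_sq]; exact hmem
  have hDD : C p.1 * pderiv 0 (C p.1 * pderiv 0 F + C p.2 * pderiv 1 F)
      + C p.2 * pderiv 1 (C p.1 * pderiv 0 F + C p.2 * pderiv 1 F) = 0 := by
    simp only [map_add, pderiv_C_mul]
    rw [pd_comm 1 0]
    have hC2 : (C (2 * p.1 * p.2) : MvPolynomial (Fin 2) ℝ) = C p.1 * C p.2 + C p.1 * C p.2 := by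
      rw [← map_mul, ← map_add]; congr 1; ring
    have hCa : (C (p.1 ^ 2) : MvPolynomial (Fin 2) ℝ) = C p.1 * C p.1 := by rw [← map_mul]; congr 1; ring
    have hCb : (C (p.2 ^ 2) : MvPolynomial (Fin 2) ℝ) = C p.2 * C p.2 := by rw [← map_mul]; congr 1; ring
    rw [hC2, hCa, hCb] at hmain
    linear_combination hmain
  have hDhom : (C p.1 * pderiv 0 F + C p.2 * pderiv 1 F).IsHomogeneous (d - 1) :=
    ((hom_pderiv 0 F hF).C_mul _).add ((hom_pderiv 1 F hF).C_mul _)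
  obtain ⟨c, hc⟩ := ker_D p hp (d - 1) _ hDhom hDD
  set s : ℝ := p.1 ^ 2 + p.2 ^ 2 with hs
  have hs0 : s ≠ 0 := by
    have hab : p.1 ≠ 0 ∨ p.2 ≠ 0 := by
      by_contra hcon; push_neg at hcon; exact hp (Prod.ext_iff.mpr ⟨hcon.1, hcon.2⟩)
    rcases hab with h | h <;> positivity
  have hDM : C p.1 * pderiv 0 (lin p * lperp p ^ (d - 1))
      + C p.2 * pderiv 1 (lin p * lperp p ^ (d - 1)) = C s * lperp p ^ (d - 1) := by
    have d0l : pderiv (0 : Fin 2) (lin p) = C p.1 := by simp [lin]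
    have d1l : pderiv (1 : Fin 2) (lin p) = C p.2 := by simp [lin]
    have d0lp : pderiv (0 : Fin 2) (lperp p) = C p.2 := by simp [lperp]
    have d1lp : pderiv (1 : Fin 2) (lperp p) = -C p.1 := by simp [lperp]
    rw [pderiv_mul, pderiv_mul, pderiv_pow, pderiv_pow, d0l, d1l, d0lp, d1lp, hs, map_add,
      map_pow, map_pow]
    ring
  have hD' : C p.1 * pderiv 0 (F - C (c / s) * (lin p * lperp p ^ (d - 1)))
      + C p.2 * pderiv 1 (F - C (c / s) * (lin p * lperp p ^ (d - 1))) = 0 := by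
    have expand : C p.1 * pderiv 0 (F - C (c / s) * (lin p * lperp p ^ (d - 1)))
        + C p.2 * pderiv 1 (F - C (c / s) * (lin p * lperp p ^ (d - 1)))
        = (C p.1 * pderiv 0 F + C p.2 * pderiv 1 F)
          - C (c / s) * (C p.1 * pderiv 0 (lin p * lperp p ^ (d - 1))
            + C p.2 * pderiv 1 (lin p * lperp p ^ (d - 1))) := by
      simp only [map_sub, pderiv_C_mul]
      ring
    rw [expand, hDM, hc, ← mul_assoc, ← map_mul, div_mul_cancel₀ c hs0]
    ring
  have hF'hom : (F - C (c / s) * (lin p * lperp p ^ (d - 1))).IsHomogeneous d := by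
    apply hF.sub
    have h1 : (lin p).IsHomogeneous 1 := by
      rw [lin]; exact (isHomogeneous_C_mul_X _ _).add (isHomogeneous_C_mul_X _ _)
    have hlp : (lperp p).IsHomogeneous 1 := by
      rw [lperp]; exact (isHomogeneous_C_mul_X _ _).sub (isHomogeneous_C_mul_X _ _)
    have h2 : ((lperp p) ^ (d - 1)).IsHomogeneous (1 * (d - 1)) := hlp.pow (d - 1)
    rw [one_mul] at h2
    have h3 := h1.mul h2
    rw [show 1 + (d - 1) = d by omega] at h3
    exact h3.C_mul _
  obtain ⟨c0, hc0⟩ := ker_D p hp d _ hF'hom hD'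
  refine ⟨c0, c / s, ?_⟩
  have hfin : F = (F - C (c / s) * (lin p * lperp p ^ (d - 1)))
      + C (c / s) * (lin p * lperp p ^ (d - 1)) := by ring
  rw [hfin, hc0]
end
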